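/- Fix N ≥ 2 and a function F : (0,∞) → ℝ. Let z : ℝ → ℂ^N be a differentiable curve whose components z_1(t),…,z_N(t) are pairwise distinct for every t and which solves the asymptotic vortex equations. Then the relative moment t ↦ Σ_r Σ_{s≠r} |z_r(t) − z_s(t)|² is constant in t. -/

import Mathlib

open Finset

lemma key_alg {N : ℕ} (w A : Fin N → ℂ) (c : Fin N → Fin N → ℝ)
    (hc : ∀ r s, c r s = c s r)
    (hA : ∀ r, A r = ∑ u, (c r u : ℂ) * (w r - w u)) :
    (∑ r, ∑ s, (starRingEnd ℂ) (w r - w s) * (Complex.I * (A r - A s))).re = 0 := by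
  set T : ℂ := ∑ u, w u with hT
  -- sum of conj differences
  have h1 : ∀ r : Fin N, ∑ s, (starRingEnd ℂ) (w r - w s)
      = (starRingEnd ℂ) ((N : ℂ) * w r - T) := by
    intro r
    rw [← map_sum]
    congr 1
    rw [Finset.sum_sub_distrib, Finset.sum_const, Finset.card_univ, Fintype.card_fin,
      nsmul_eq_mul, hT]
  set B : ℂ := ∑ r, (starRingEnd ℂ) ((N : ℂ) * w r - T) * A r with hB
  -- split and symmetrize the double sum
  have hsplit : (∑ r, ∑ s, (starRingEnd ℂ) (w r - w s) * (Complex.I * (A r - A s)))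
      = 2 * (Complex.I * B) := by
    have e1 : ∀ r s : Fin N, (starRingEnd ℂ) (w r - w s) * (Complex.I * (A r - A s))
        = (starRingEnd ℂ) (w r - w s) * (Complex.I * A r)
          - (starRingEnd ℂ) (w r - w s) * (Complex.I * A s) := by intro r s; ring
    simp_rw [e1, Finset.sum_sub_distrib]
    have e2 : (∑ r, ∑ s, (starRingEnd ℂ) (w r - w s) * (Complex.I * A s))
        = - ∑ r, ∑ s, (starRingEnd ℂ) (w r - w s) * (Complex.I * A r) := by
      rw [Finset.sum_comm]
      rw [← Finset.sum_neg_distrib]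
      apply Finset.sum_congr rfl
      intro s _
      rw [← Finset.sum_neg_distrib]
      apply Finset.sum_congr rfl
      intro r _
      have : w r - w s = -(w s - w r) := by ring
      rw [this, map_neg]; ring
    rw [e2, sub_neg_eq_add]
    have e3 : (∑ r, ∑ s, (starRingEnd ℂ) (w r - w s) * (Complex.I * A r))
        = Complex.I * B := by
      rw [hB, Finset.mul_sum]
      apply Finset.sum_congr rfl
      intro r _
      rw [← Finset.sum_mul, h1 r]; ring
    rw [e3]; ring
  -- B is real
  have hB1 : B = ∑ r, ∑ u, (c r u : ℂ) *
      ((starRingEnd ℂ) ((N : ℂ) * w r - T) * (w r - w u)) := by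
    rw [hB]
    apply Finset.sum_congr rfl
    intro r _
    rw [hA r, Finset.mul_sum]
    apply Finset.sum_congr rfl
    intro u _
    ring
  have hB2 : B = ∑ r, ∑ u, (c r u : ℂ) *
      ((starRingEnd ℂ) ((N : ℂ) * w u - T) * (w u - w r)) := by
    rw [hB1, Finset.sum_comm]
    apply Finset.sum_congr rfl
    intro r _
    apply Finset.sum_congr rfl
    intro u _
    rw [hc r u]
  have hterm : ∀ r u : Fin N,
      (c r u : ℂ) * ((starRingEnd ℂ) ((N : ℂ) * w r - T) * (w r - w u))
        + (c r u : ℂ) * ((starRingEnd ℂ) ((N : ℂ) * w u - T) * (w u - w r))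
      = ((c r u * (N * Complex.normSq (w r - w u)) : ℝ) : ℂ) := by
    intro r u
    have h3 : (starRingEnd ℂ) ((N : ℂ) * w r - T) * (w r - w u)
        + (starRingEnd ℂ) ((N : ℂ) * w u - T) * (w u - w r)
        = (starRingEnd ℂ) (((N : ℂ) * w r - T) - ((N : ℂ) * w u - T)) * (w r - w u) := by
      rw [map_sub (starRingEnd ℂ) ((N : ℂ) * w r - T) ((N : ℂ) * w u - T)]; ring
    have h4 : ((N : ℂ) * w r - T) - ((N : ℂ) * w u - T) = (N : ℂ) * (w r - w u) := by ring
    have h5 : (starRingEnd ℂ) ((N : ℂ) * (w r - w u)) * (w r - w u)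
        = (N : ℂ) * ((Complex.normSq (w r - w u) : ℝ) : ℂ) := by
      rw [map_mul, Complex.conj_natCast, mul_assoc, ← Complex.normSq_eq_conj_mul_self]
    push_cast
    rw [← mul_add, h3, h4, h5]
  have hBB : B + B = ((∑ r, ∑ u, c r u * (N * Complex.normSq (w r - w u)) : ℝ) : ℂ) := by
    nth_rewrite 1 [hB1]
    nth_rewrite 1 [hB2]
    rw [← Finset.sum_add_distrib]
    push_cast
    apply Finset.sum_congr rfl
    intro r _
    rw [← Finset.sum_add_distrib]
    apply Finset.sum_congr rfl
    intro u _
    have := hterm r u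
    push_cast at this ⊢
    linear_combination this
  have hBim : B.im = 0 := by
    have := congrArg Complex.im hBB
    simp only [Complex.add_im, Complex.ofReal_im] at this
    linarith
  rw [hsplit]
  simp [Complex.mul_re, Complex.mul_im, Complex.I_re, Complex.I_im, hBim]


/-- For `N` vortices with pairwise distinct positions solving the asymptotic
vortex equations, the relative moment `Σ_r Σ_{s≠r} |z_r − z_s|²` (the
leading-order form of the conserved quantity `Q`) is conserved. -/
theorem relative_moment_conserved (N : ℕ) (hN : 2 ≤ N) (F : ℝ → ℝ)
    (z : ℝ → Fin N → ℂ)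
    (hdist : ∀ (t : ℝ) (r s : Fin N), r ≠ s → z t r ≠ z t s)
    (heq : ∀ (t : ℝ) (r : Fin N),
      HasDerivAt (fun τ => z τ r)
        (Complex.I * ∑ s ∈ univ.erase r,
          (F (‖z t r - z t s‖) : ℂ) * (z t r - z t s)) t) :
    ∀ t t' : ℝ,
      ∑ r, ∑ s ∈ univ.erase r, ‖z t r - z t s‖ ^ 2
        = ∑ r, ∑ s ∈ univ.erase r, ‖z t' r - z t' s‖ ^ 2 := by
  have key : ∀ τ : ℝ, HasDerivAt
      (fun τ' => ∑ r, ∑ s ∈ univ.erase r, ‖z τ' r - z τ' s‖ ^ 2) 0 τ := by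
    intro τ
    set c : Fin N → Fin N → ℝ := fun r s => F (‖z τ r - z τ s‖) with hcdef
    set v : Fin N → ℂ := fun r =>
      Complex.I * ∑ s ∈ univ.erase r, (c r s : ℂ) * (z τ r - z τ s) with hvdef
    set A : Fin N → ℂ := fun r => ∑ u, (c r u : ℂ) * (z τ r - z τ u) with hAdef
    have hv : ∀ r, HasDerivAt (fun τ' => z τ' r) (v r) τ := by
      intro r
      simpa [hvdef, hcdef] using heq τ r
    have hpair : ∀ r s : Fin N,
        HasDerivAt (fun τ' => z τ' r - z τ' s) (v r - v s) τ :=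
      fun r s => (hv r).sub (hv s)
    have hre : ∀ r s : Fin N,
        HasDerivAt (fun τ' => (z τ' r - z τ' s).re) ((v r - v s).re) τ := fun r s =>
      (Complex.reCLM.hasFDerivAt.comp_hasDerivAt τ (hpair r s))
    have him : ∀ r s : Fin N,
        HasDerivAt (fun τ' => (z τ' r - z τ' s).im) ((v r - v s).im) τ := fun r s =>
      (Complex.imCLM.hasFDerivAt.comp_hasDerivAt τ (hpair r s))
    set D : Fin N → Fin N → ℝ := fun r s =>
      (v r - v s).re * (z τ r - z τ s).re + (z τ r - z τ s).re * (v r - v s).re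
        + ((v r - v s).im * (z τ r - z τ s).im + (z τ r - z τ s).im * (v r - v s).im)
      with hDdef
    have hsq : ∀ r s : Fin N,
        HasDerivAt (fun τ' => ‖z τ' r - z τ' s‖ ^ 2) (D r s) τ := by
      intro r s
      have h := ((hre r s).mul (hre r s)).add ((him r s).mul (him r s))
      have hfun : (fun τ' => ‖z τ' r - z τ' s‖ ^ 2)
          = fun τ' => (z τ' r - z τ' s).re * (z τ' r - z τ' s).re
              + (z τ' r - z τ' s).im * (z τ' r - z τ' s).im := by
        funext τ'
        rw [Complex.sq_norm, Complex.normSq_apply]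
      rw [hfun, hDdef]
      exact h
    have hsum : HasDerivAt
        (fun τ' => ∑ r, ∑ s ∈ univ.erase r, ‖z τ' r - z τ' s‖ ^ 2)
        (∑ r, ∑ s ∈ univ.erase r, D r s) τ :=
      HasDerivAt.fun_sum fun r _ => HasDerivAt.fun_sum fun s _ => hsq r s
    have hc : ∀ r s, c r s = c s r := by
      intro r s
      simp only [hcdef]
      rw [norm_sub_rev]
    have hvA : ∀ r, v r = Complex.I * A r := by
      intro r
      simp only [hvdef, hAdef]
      congr 1
      apply Finset.sum_erase
      simp
    have hzero : (∑ r, ∑ s ∈ univ.erase r, D r s) = 0 := by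
      have hD2 : ∀ r s : Fin N, D r s
          = 2 * ((starRingEnd ℂ) (z τ r - z τ s) * (Complex.I * (A r - A s))).re := by
        intro r s
        have hd : v r - v s = Complex.I * (A r - A s) := by
          rw [hvA r, hvA s]; ring
        rw [hDdef]
        simp only [← hd, Complex.mul_re, Complex.conj_re, Complex.conj_im, Complex.sub_re,
          Complex.sub_im]
        ring
      have herase : ∀ r : Fin N,
          (∑ s ∈ univ.erase r, D r s) = ∑ s, D r s := by
        intro r
        apply Finset.sum_erase
        rw [hDdef]
        simp
      calc (∑ r, ∑ s ∈ univ.erase r, D r s)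
          = ∑ r, ∑ s, 2 * ((starRingEnd ℂ) (z τ r - z τ s)
              * (Complex.I * (A r - A s))).re := by
            apply Finset.sum_congr rfl
            intro r _
            rw [herase r]
            exact Finset.sum_congr rfl fun s _ => hD2 r s
        _ = 2 * (∑ r, ∑ s, (starRingEnd ℂ) (z τ r - z τ s)
              * (Complex.I * (A r - A s))).re := by
            rw [Complex.re_sum, Finset.mul_sum]
            apply Finset.sum_congr rfl
            intro r _
            rw [Complex.re_sum, Finset.mul_sum]
        _ = 0 := by
            rw [key_alg (fun r => z τ r) A c hc (fun r => by rw [hAdef])]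
            ring
    rw [← hzero]
    exact hsum
  intro t t'
  exact is_const_of_deriv_eq_zero
    (fun x => (key x).differentiableAt) (fun x => (key x).deriv) t t'
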